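/- Let G be a group, B a G-graded ring, and (X, |·|) a G-graded set (a set with a weight function X → G). Then the linear map M_G(M_X(B)) → M_{|X|}(M_G(B)) determined by ε_{s,t} ⊗ ε_{x,y} ⊗ b ↦ ε_{x,y} ⊗ ε_{s|x|, t|y|} ⊗ b is an isomorphism of G-graded rings, natural in X and B, where the matrix gradings are as follows: ε_{s,t}⊗b has degree s|b|t⁻¹ in M_G(B) for homogeneous b; ε_{x,y}⊗b has degree |x||b||y|⁻¹ in M_X(B); and the index set |X| in the target is trivially graded. -/

import Mathlib

/-- Let `G` be a group, `B` a `G`-graded ring and `(X, ω)` a `G`-graded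
set (a set with a weight `ω : X → G`).  The linear map determined by
`ε_{s,t} ⊗ ε_{x,y} ⊗ b ↦ ε_{x,y} ⊗ ε_{s·ω(x), t·ω(y)} ⊗ b` is an isomorphism of
`G`-graded rings `M_G(M_X(B)) ≅ M_{|X|}(M_G(B))`, natural in `X` and `B`.  The matrix
gradings are: `ε_{s,t} ⊗ b` has degree `s·|b|·t⁻¹` in `M_G(B)` for homogeneous `b`;
`ε_{x,y} ⊗ b` has degree `ω(x)·|b|·ω(y)⁻¹` in `M_X(B)`; and the index set `|X|` in the
target is trivially graded.  The matrix rings are presented by additive isomorphisms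
`jP`, `jQ` subject to the matrix multiplication rules. -/
theorem stmt_13 {G B X : Type} [Group G] [DecidableEq G] [DecidableEq X] [Ring B]
    (𝒷 : G → AddSubgroup B) [DirectSum.Decomposition 𝒷]
    (hBmul : ∀ (g h : G) (a b : B), a ∈ 𝒷 g → b ∈ 𝒷 h → a * b ∈ 𝒷 (g * h))
    (ω : X → G)
    {P Q : Type} [NonUnitalRing P] [NonUnitalRing Q]
    (jP : ((G × G) →₀ ((X × X) →₀ B)) ≃+ P)
    (hjP : ∀ (p q : G × G) (x y : X × X) (a b : B),
      jP (Finsupp.single p (Finsupp.single x a)) *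
          jP (Finsupp.single q (Finsupp.single y b)) =
        if p.2 = q.1 ∧ x.2 = y.1
        then jP (Finsupp.single (p.1, q.2) (Finsupp.single (x.1, y.2) (a * b))) else 0)
    (jQ : ((X × X) →₀ ((G × G) →₀ B)) ≃+ Q)
    (hjQ : ∀ (x y : X × X) (p q : G × G) (a b : B),
      jQ (Finsupp.single x (Finsupp.single p a)) *
          jQ (Finsupp.single y (Finsupp.single q b)) =
        if x.2 = y.1 ∧ p.2 = q.1
        then jQ (Finsupp.single (x.1, y.2) (Finsupp.single (p.1, q.2) (a * b))) else 0) :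
    ∃ e : P ≃+* Q,
      -- the defining formula
      (∀ (st : G × G) (xy : X × X) (b : B),
        e (jP (Finsupp.single st (Finsupp.single xy b))) =
          jQ (Finsupp.single xy (Finsupp.single (st.1 * ω xy.1, st.2 * ω xy.2) b))) ∧
      -- `e` is an isomorphism of `G`-graded rings
      (∀ (g : G) (z : P),
        z ∈ AddSubgroup.closure {y : P | ∃ (st : G × G) (xy : X × X) (d : G) (b : B),
            b ∈ 𝒷 d ∧ st.1 * (ω xy.1 * d * (ω xy.2)⁻¹) * st.2⁻¹ = g ∧
            y = jP (Finsupp.single st (Finsupp.single xy b))} ↔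
        e z ∈ AddSubgroup.closure {y : Q | ∃ (xy : X × X) (st : G × G) (d : G) (b : B),
            b ∈ 𝒷 d ∧ st.1 * d * st.2⁻¹ = g ∧
            y = jQ (Finsupp.single xy (Finsupp.single st b))}) ∧
      -- naturality in `X` and `B`
      (∀ (X' B' : Type) [Ring B']
        (𝒷' : G → AddSubgroup B') (ω' : X' → G)
        (f : X → X') (_ : ∀ x : X, ω' (f x) = ω x)
        (φ : B →+* B') (_ : ∀ (d : G) (b : B), b ∈ 𝒷 d → φ b ∈ 𝒷' d)
        (P' Q' : Type) [NonUnitalRing P'] [NonUnitalRing Q']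
        (jP' : ((G × G) →₀ ((X' × X') →₀ B')) ≃+ P')
        (jQ' : ((X' × X') →₀ ((G × G) →₀ B')) ≃+ Q')
        (e' : P' ≃+* Q')
        (_ : ∀ (st : G × G) (xy : X' × X') (b : B'),
          e' (jP' (Finsupp.single st (Finsupp.single xy b))) =
            jQ' (Finsupp.single xy (Finsupp.single (st.1 * ω' xy.1, st.2 * ω' xy.2) b)))
        (F : P →+ P')
        (_ : ∀ (st : G × G) (xy : X × X) (b : B),
          F (jP (Finsupp.single st (Finsupp.single xy b))) =
            jP' (Finsupp.single st (Finsupp.single (f xy.1, f xy.2) (φ b))))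
        (Gm : Q →+ Q')
        (_ : ∀ (xy : X × X) (st : G × G) (b : B),
          Gm (jQ (Finsupp.single xy (Finsupp.single st b))) =
            jQ' (Finsupp.single (f xy.1, f xy.2) (Finsupp.single st (φ b)))),
        ∀ z : P, e' (F z) = Gm (e z)) := by

  classical
  -- the underlying additive reshuffling of nested finsupps
  set T : ((G × G) →₀ ((X × X) →₀ B)) →+ ((X × X) →₀ ((G × G) →₀ B)) :=
    Finsupp.liftAddHom fun st => Finsupp.liftAddHom fun xy =>
      (Finsupp.singleAddHom xy).comp
        (Finsupp.singleAddHom (st.1 * ω xy.1, st.2 * ω xy.2)) with hTdef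
  set S : ((X × X) →₀ ((G × G) →₀ B)) →+ ((G × G) →₀ ((X × X) →₀ B)) :=
    Finsupp.liftAddHom fun xy => Finsupp.liftAddHom fun st =>
      (Finsupp.singleAddHom (st.1 * (ω xy.1)⁻¹, st.2 * (ω xy.2)⁻¹)).comp
        (Finsupp.singleAddHom xy) with hSdef
  have hT : ∀ (st : G × G) (xy : X × X) (b : B),
      T (Finsupp.single st (Finsupp.single xy b)) =
        Finsupp.single xy (Finsupp.single (st.1 * ω xy.1, st.2 * ω xy.2) b) := by
    intro st xy b
    simp only [hTdef, Finsupp.liftAddHom_apply_single, AddMonoidHom.comp_apply,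
      Finsupp.singleAddHom_apply]
  have hS : ∀ (xy : X × X) (st : G × G) (b : B),
      S (Finsupp.single xy (Finsupp.single st b)) =
        Finsupp.single (st.1 * (ω xy.1)⁻¹, st.2 * (ω xy.2)⁻¹) (Finsupp.single xy b) := by
    intro xy st b
    simp only [hSdef, Finsupp.liftAddHom_apply_single, AddMonoidHom.comp_apply,
      Finsupp.singleAddHom_apply]
  have hST : ∀ m, S (T m) = m := by
    have : S.comp T = AddMonoidHom.id _ := by
      refine Finsupp.addHom_ext' fun st => Finsupp.addHom_ext fun xy b => ?_
      simp [hT, hS, mul_inv_cancel_right]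
    intro m; exact DFunLike.congr_fun this m
  have hTS : ∀ m, T (S m) = m := by
    have : T.comp S = AddMonoidHom.id _ := by
      refine Finsupp.addHom_ext' fun xy => Finsupp.addHom_ext fun st b => ?_
      simp [hT, hS, inv_mul_cancel_right]
    intro m; exact DFunLike.congr_fun this m
  let Te : ((G × G) →₀ ((X × X) →₀ B)) ≃+ ((X × X) →₀ ((G × G) →₀ B)) :=
    { toFun := T, invFun := S, left_inv := hST, right_inv := hTS,
      map_add' := T.map_add }
  let e0 : P ≃+ Q := (jP.symm.trans Te).trans jQ
  have he0 : ∀ (st : G × G) (xy : X × X) (b : B),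
      e0 (jP (Finsupp.single st (Finsupp.single xy b))) =
        jQ (Finsupp.single xy (Finsupp.single (st.1 * ω xy.1, st.2 * ω xy.2) b)) := by
    intro st xy b
    show jQ (Te (jP.symm (jP _))) = _
    rw [jP.symm_apply_apply]
    show jQ (T _) = _
    rw [hT]
  -- extensionality for additive maps out of P
  have extPfun : ∀ {N : Type} [AddCommMonoid N] (f g : P →+ N),
      (∀ (st : G × G) (xy : X × X) (b : B),
        f (jP (Finsupp.single st (Finsupp.single xy b))) =
          g (jP (Finsupp.single st (Finsupp.single xy b)))) → ∀ z : P, f z = g z := by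
    intro N _ f g h z
    have hcomp : f.comp jP.toAddMonoidHom = g.comp jP.toAddMonoidHom := by
      refine Finsupp.addHom_ext' fun st => Finsupp.addHom_ext fun xy b => ?_
      simpa using h st xy b
    have := DFunLike.congr_fun hcomp (jP.symm z)
    simpa using this
  -- multiplicativity on generators
  have key : ∀ (p q : G × G) (x y : X × X) (a b : B),
      e0 (jP (Finsupp.single p (Finsupp.single x a)) *
          jP (Finsupp.single q (Finsupp.single y b))) =
        e0 (jP (Finsupp.single p (Finsupp.single x a))) *
          e0 (jP (Finsupp.single q (Finsupp.single y b))) := by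
    intro p q x y a b
    rw [hjP, he0, he0, hjQ]
    by_cases h1 : x.2 = y.1
    · by_cases h2 : p.2 = q.1
      · have c2 : p.2 * ω x.2 = q.1 * ω y.1 := by rw [h1, h2]
        rw [if_pos ⟨h2, h1⟩, if_pos ⟨h1, c2⟩, he0]
      · have h3 : ¬(p.2 * ω x.2 = q.1 * ω y.1) := by
          rw [h1]; intro hc; exact h2 (mul_right_cancel hc)
        simp [h1, h2, h3]
    · simp [h1]
  have hmul : ∀ z w : P, e0 (z * w) = e0 z * e0 w := by
    have step1 : ∀ (p : G × G) (x : X × X) (a : B) (w : P),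
        e0 (jP (Finsupp.single p (Finsupp.single x a)) * w) =
          e0 (jP (Finsupp.single p (Finsupp.single x a))) * e0 w := by
      intro p x a
      exact extPfun
        (e0.toAddMonoidHom.comp
          (AddMonoidHom.mulLeft (jP (Finsupp.single p (Finsupp.single x a)))))
        ((AddMonoidHom.mulLeft
          (e0 (jP (Finsupp.single p (Finsupp.single x a))))).comp e0.toAddMonoidHom)
        (fun q y b => key p q x y a b)
    intro z w
    exact extPfun
      ((AddMonoidHom.mulRight (e0 w)).comp e0.toAddMonoidHom)
      (e0.toAddMonoidHom.comp (AddMonoidHom.mulRight w))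
      (fun p x a => (step1 p x a w).symm) z |>.symm
  let e : P ≃+* Q :=
    { e0 with map_mul' := hmul }
  have heapp : ∀ z : P, e z = e0 z := fun _ => rfl
  refine ⟨e, ?_, ?_, ?_⟩
  · intro st xy b
    rw [heapp, he0]
  · -- graded isomorphism
    intro g z
    have himg : (⇑e0 '' {y : P | ∃ (st : G × G) (xy : X × X) (d : G) (b : B),
          b ∈ 𝒷 d ∧ st.1 * (ω xy.1 * d * (ω xy.2)⁻¹) * st.2⁻¹ = g ∧
          y = jP (Finsupp.single st (Finsupp.single xy b))}) =
        {y : Q | ∃ (xy : X × X) (st : G × G) (d : G) (b : B),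
          b ∈ 𝒷 d ∧ st.1 * d * st.2⁻¹ = g ∧
          y = jQ (Finsupp.single xy (Finsupp.single st b))} := by
    {
      ext w
      constructor
      · rintro ⟨-, ⟨st, xy, d, b, hb, hg, rfl⟩, rfl⟩
        refine ⟨xy, (st.1 * ω xy.1, st.2 * ω xy.2), d, b, hb, ?_, (he0 st xy b)⟩
        rw [← hg]; group
      · rintro ⟨xy, st, d, b, hb, hg, rfl⟩
        refine ⟨jP (Finsupp.single (st.1 * (ω xy.1)⁻¹, st.2 * (ω xy.2)⁻¹)
          (Finsupp.single xy b)), ⟨(st.1 * (ω xy.1)⁻¹, st.2 * (ω xy.2)⁻¹), xy, d, b,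
          hb, by rw [← hg]; group, rfl⟩, ?_⟩
        rw [he0]
        simp [inv_mul_cancel_right]
    }
    rw [heapp, ← himg, ← AddEquiv.coe_toAddMonoidHom e0, ← AddMonoidHom.map_closure]
    constructor
    · intro hz
      exact ⟨z, hz, rfl⟩
    · rintro ⟨w, hw, hww⟩
      rwa [e0.injective hww] at hw
  · -- naturality
    intro X' B' _ 𝒷' ω' f hf φ hφ P' Q' _ _ jP' jQ' e' he' F hF Gm hGm
    refine extPfun (e'.toAddEquiv.toAddMonoidHom.comp F)
      (Gm.comp e.toAddEquiv.toAddMonoidHom) (fun st xy b => ?_)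
    show e' (F _) = Gm (e _)
    rw [hF, he', heapp, he0, hGm, hf, hf]
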